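/- The linear span of the truncated moment cone R_A(K) equals the orthogonal complement of the vanishing ideal: Span R_A(K) = {y ∈ ℝ^A : ⟨p, y⟩ = 0 for all p ∈ ℝ[x]_A with p ≡ 0 on K}. Consequently dim R_A(K) = |A| − dim I(K)_A. -/

import Mathlib

open MeasureTheory Finset

/-- The monomial `x^α` for an exponent vector `α : Fin n → ℕ`. -/
noncomputable def mono {n : ℕ} (α : Fin n → ℕ) (x : Fin n → ℝ) : ℝ := ∏ i, x i ^ α i

/-- The polynomial with coefficient vector `c` supported on the finite power set `A`. -/
noncomputable def polyA {n : ℕ} (A : Finset (Fin n → ℕ)) (c : A → ℝ) (x : Fin n → ℝ) : ℝ :=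
  ∑ α : A, c α * mono (α : Fin n → ℕ) x

/-- The truncated moment cone `R_A(K)`: those `y ∈ ℝ^A` admitting a positive Borel
representing measure supported in `K`. -/
def momCone {n : ℕ} (A : Finset (Fin n → ℕ)) (K : Set (Fin n → ℝ)) : Set (A → ℝ) :=
  {y | ∃ μ : Measure (Fin n → ℝ), μ Kᶜ = 0 ∧
      (∀ α : A, Integrable (mono (α : Fin n → ℕ)) μ) ∧
      (∀ α : A, y α = ∫ x, mono (α : Fin n → ℕ) x ∂μ)}

/-- The vanishing ideal `I(K)_A`: coefficient vectors of polynomials supported on `A`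
that vanish identically on `K`, as a submodule of `ℝ^A`. -/
noncomputable def vanishIdeal {n : ℕ} (A : Finset (Fin n → ℕ)) (K : Set (Fin n → ℝ)) :
    Submodule ℝ (A → ℝ) where
  carrier := {c | ∀ x ∈ K, polyA A c x = 0}
  add_mem' := by
    intro a b ha hb x hx
    have h : polyA A (a + b) x = polyA A a x + polyA A b x := by
      simp [polyA, add_mul, Finset.sum_add_distrib]
    rw [h, ha x hx, hb x hx, add_zero]
  zero_mem' := by
    intro x hx
    simp [polyA]
  smul_mem' := by
    intro r a ha x hx
    have h : polyA A (r • a) x = r * polyA A a x := by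
      simp [polyA, Finset.mul_sum, mul_assoc]
    rw [h, ha x hx, mul_zero]


lemma aux_int_dirac {n : ℕ} (f : (Fin n → ℝ) → ℝ) (x : Fin n → ℝ) :
    Integrable f (Measure.dirac x) :=
  (integrable_const (f x)).congr (ae_eq_dirac _).symm

lemma aux_integral_dirac {n : ℕ} (f : (Fin n → ℝ) → ℝ) (x : Fin n → ℝ) :
    f x = ∫ y, f y ∂(Measure.dirac x) := (integral_dirac f x).symm

lemma aux_eval {n : ℕ} (A : Finset (Fin n → ℕ)) {K : Set (Fin n → ℝ)} (hK : IsClosed K)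
    {x : Fin n → ℝ} (hx : x ∈ K) : (fun α : A => mono (α : Fin n → ℕ) x) ∈ momCone A K := by
  refine ⟨Measure.dirac x, ?_, fun α => aux_int_dirac _ x, fun α => aux_integral_dirac _ x⟩
  rw [Measure.dirac_apply' _ hK.measurableSet.compl]
  simp [hx]

set_option maxHeartbeats 800000 in
/-- `Span R_A(K) = I(K)_A^⊥` and `dim R_A(K) = |A| − dim I(K)_A`. -/
theorem stmt5 {n : ℕ} (A : Finset (Fin n → ℕ)) (K : Set (Fin n → ℝ)) (hK : IsClosed K)
    (hne : K.Nonempty) :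
    ((Submodule.span ℝ (momCone A K) : Submodule ℝ (A → ℝ)) : Set (A → ℝ)) =
        {y : A → ℝ | ∀ c ∈ vanishIdeal A K, ∑ α : A, c α * y α = 0} ∧
      Module.finrank ℝ (Submodule.span ℝ (momCone A K)) =
        A.card - Module.finrank ℝ (vanishIdeal A K) := by
  classical
  haveI : MeasurableSingletonClass (Fin n → ℝ) := inferInstance
  set e : EuclideanSpace ℝ ↥A ≃ₗ[ℝ] (↥A → ℝ) := WithLp.linearEquiv 2 ℝ (↥A → ℝ) with he_def
  have hmem_map : ∀ (p : Submodule ℝ (↥A → ℝ)) (x : EuclideanSpace ℝ ↥A),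
      x ∈ p.map (e.symm : (↥A → ℝ) →ₗ[ℝ] EuclideanSpace ℝ ↥A) ↔ e x ∈ p := by
    intro p x
    rw [show Submodule.map (e.symm : (↥A → ℝ) →ₗ[ℝ] EuclideanSpace ℝ ↥A) p
        = Submodule.map (e.symm : (↥A → ℝ) →ₗ[ℝ] EuclideanSpace ℝ ↥A) p from rfl,
      Submodule.mem_map]
    constructor
    · rintro ⟨z, hz, rfl⟩; simpa using hz
    · intro h; exact ⟨e x, h, by simp⟩
  have hinner : ∀ c y : EuclideanSpace ℝ ↥A, (inner ℝ c y : ℝ) = ∑ α : A, c α * y α := by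
    intro c y
    simp [PiLp.inner_apply, RCLike.inner_apply, mul_comm]
  -- the transported submodules
  set V : Submodule ℝ (EuclideanSpace ℝ ↥A) := (vanishIdeal A K).map (e.symm : (↥A → ℝ) →ₗ[ℝ] EuclideanSpace ℝ ↥A) with hV_def
  set W : Submodule ℝ (EuclideanSpace ℝ ↥A) :=
    (Submodule.span ℝ (momCone A K)).map (e.symm : (↥A → ℝ) →ₗ[ℝ] EuclideanSpace ℝ ↥A) with hW_def
  have happ : ∀ (f : ↥A → ℝ) (α : ↥A), (e.symm f) α = f α := fun _ _ => rfl
  have happ' : ∀ (f : EuclideanSpace ℝ ↥A) (α : ↥A), (e f) α = f α := fun _ _ => rfl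
  have hWspan : W = Submodule.span ℝ (e.symm '' momCone A K) := Submodule.map_span _ _
  have hVmem : ∀ c : EuclideanSpace ℝ ↥A,
      c ∈ V ↔ ∀ x ∈ K, (∑ α : A, c α * mono (α : Fin n → ℕ) x) = 0 := by
    intro c
    rw [hV_def, hmem_map]
    constructor
    · intro h x hx
      have := h x hx
      simpa [polyA, happ'] using this
    · intro h x hx
      simpa [polyA, happ'] using h x hx
  -- mom cone elements are orthogonal to the vanishing ideal
  have hsub : e.symm '' momCone A K ⊆ (Vᗮ : Set (EuclideanSpace ℝ ↥A)) := by
    rintro - ⟨y, ⟨μ, hμK, hint, hy⟩, rfl⟩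
    rw [SetLike.mem_coe, Submodule.mem_orthogonal]
    intro c hc
    rw [hinner]
    have hcy : ∀ α : A, c α * (e.symm y) α = ∫ x, c α * mono (α : Fin n → ℕ) x ∂μ := by
      intro α
      rw [happ, hy α, ← integral_const_mul]
    rw [Finset.sum_congr rfl (fun α _ => hcy α), ← integral_finset_sum]
    · have hae : ∀ᵐ x ∂μ, (∑ α : A, c α * mono (α : Fin n → ℕ) x) = 0 := by
        have hss : {x | ¬ (∑ α : A, c α * mono (α : Fin n → ℕ) x) = 0} ⊆ Kᶜ := by
          intro x hx
          simp only [Set.mem_setOf_eq] at hx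
          intro hxK
          exact hx ((hVmem c).mp hc x hxK)
        exact measure_mono_null hss hμK
      exact integral_eq_zero_of_ae hae
    · intro α _
      exact (hint α).const_mul _
  have heval : ∀ x ∈ K, (fun α : A => mono (α : Fin n → ℕ) x) ∈ momCone A K :=
    fun x hx => aux_eval A hK hx
  have hWle : W ≤ Vᗮ := by
    rw [hWspan]
    exact Submodule.span_le.mpr hsub
  have hWperp : Wᗮ ≤ V := by
    intro c hc
    rw [hVmem]
    intro x hx
    have hmem : e.symm (fun α : A => mono (α : Fin n → ℕ) x) ∈ W := by
      rw [hWspan]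
      exact Submodule.subset_span ⟨_, heval x hx, rfl⟩
    have h0 := (Submodule.mem_orthogonal _ _).mp hc _ hmem
    rw [hinner] at h0
    simpa [happ, mul_comm] using h0
  have hVW : Vᗮ ≤ W := by
    calc Vᗮ ≤ Wᗮᗮ := Submodule.orthogonal_le hWperp
    _ = W := Submodule.orthogonal_orthogonal W
  have hWeq : W = Vᗮ := le_antisymm hWle hVW
  constructor
  · ext y
    have h1 : y ∈ Submodule.span ℝ (momCone A K) ↔ e.symm y ∈ W := by
      rw [hW_def, hmem_map]
      simp
    simp only [SetLike.mem_coe, Set.mem_setOf_eq]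
    rw [h1, hWeq, Submodule.mem_orthogonal]
    constructor
    · intro h c hc
      have hc' : e.symm c ∈ V := by rw [hV_def, hmem_map]; simpa using hc
      have := h _ hc'
      rw [hinner] at this
      simpa [happ] using this
    · intro h c hc
      rw [hinner]
      have hc' : e c ∈ vanishIdeal A K := by rw [hV_def, hmem_map] at hc; exact hc
      have := h _ hc'
      simp only [happ'] at this ⊢
      simpa [happ] using this
  · have hrank : Module.finrank ℝ V + Module.finrank ℝ Vᗮ
        = Module.finrank ℝ (EuclideanSpace ℝ ↥A) :=
      Submodule.finrank_add_finrank_orthogonal V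
    have hE : Module.finrank ℝ (EuclideanSpace ℝ ↥A) = A.card := by
      simp [finrank_euclideanSpace]
    have h1 : Module.finrank ℝ W = Module.finrank ℝ (Submodule.span ℝ (momCone A K)) :=
      LinearEquiv.finrank_map_eq _ _
    have h2 : Module.finrank ℝ V = Module.finrank ℝ (vanishIdeal A K) :=
      LinearEquiv.finrank_map_eq _ _
    have h3 : Module.finrank ℝ W = Module.finrank ℝ Vᗮ := by rw [hWeq]
    omega
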